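/- Let A be a unital C*-algebra, v ∈ A a unitary, D ∈ A self-adjoint, and t > 0. Define c(x) := √(1/2 − x·(1+x²)^{−1/2}/2), s(x) := √(1/2 + x·(1+x²)^{−1/2}/2), and set c_t := cfc(fun x => c(x/t)) D, s_t := cfc(fun x => s(x/t)) D, r_t := √(c_t s_t) (positive square root), g := cfc(fun x => (1 + x²/t²)^{−1/4}) D, and D_t := t⁻¹·D. In M₂(A), let e := [[s_t², r_t v r_t],[r_t v* r_t, c_t²]] and L := [[D_t, v],[v*, −D_t]]. Then g is positive and invertible in A, and 2e − 1 = [[g,0],[0,g]] · L · [[g,0],[0,g]]; in particular 2e − 1 is congruent to the spectral-localiser matrix L via a positive invertible diagonal matrix. -/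

import Mathlib

private lemma auxRpow (u : ℝ) : (1 + u ^ 2) ^ (-(1 : ℝ) / 2) = (Real.sqrt (1 + u ^ 2))⁻¹ := by
  have h : (0:ℝ) < 1 + u ^ 2 := by positivity
  rw [show (-(1:ℝ)/2) = -(1/(2:ℝ)) by ring, Real.rpow_neg h.le, ← Real.sqrt_eq_rpow]

private lemma auxMem (u : ℝ) :
    -1 ≤ u * (Real.sqrt (1 + u ^ 2))⁻¹ ∧ u * (Real.sqrt (1 + u ^ 2))⁻¹ ≤ 1 := by
  have h : (0:ℝ) < 1 + u ^ 2 := by positivity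
  have hB : 0 < Real.sqrt (1 + u ^ 2) := Real.sqrt_pos.mpr h
  have habs : |u| ≤ Real.sqrt (1 + u ^ 2) := by
    rw [← Real.sqrt_sq_eq_abs]; exact Real.sqrt_le_sqrt (by nlinarith)
  rw [abs_le] at habs
  have hinv : (0:ℝ) ≤ (Real.sqrt (1 + u ^ 2))⁻¹ := by positivity
  constructor
  · have := mul_le_mul_of_nonneg_right habs.1 hinv
    simpa [neg_mul, mul_inv_cancel₀ hB.ne'] using this
  · have := mul_le_mul_of_nonneg_right habs.2 hinv
    simpa [mul_inv_cancel₀ hB.ne'] using this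

private lemma sSq (u : ℝ) :
    Real.sqrt (1 / 2 + u * (1 + u ^ 2) ^ (-(1 : ℝ) / 2) / 2) ^ 2
      = 1 / 2 + u * (1 + u ^ 2) ^ (-(1 : ℝ) / 2) / 2 := by
  apply Real.sq_sqrt; rw [auxRpow]; have := (auxMem u).1; linarith

private lemma cSq (u : ℝ) :
    Real.sqrt (1 / 2 - u * (1 + u ^ 2) ^ (-(1 : ℝ) / 2) / 2) ^ 2
      = 1 / 2 - u * (1 + u ^ 2) ^ (-(1 : ℝ) / 2) / 2 := by
  apply Real.sq_sqrt; rw [auxRpow]; have := (auxMem u).2; linarith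

private lemma csMul (u : ℝ) :
    Real.sqrt (1 / 2 - u * (1 + u ^ 2) ^ (-(1 : ℝ) / 2) / 2)
      * Real.sqrt (1 / 2 + u * (1 + u ^ 2) ^ (-(1 : ℝ) / 2) / 2)
      = 2⁻¹ * (1 + u ^ 2) ^ (-(1 : ℝ) / 2) := by
  have h : (0:ℝ) < 1 + u ^ 2 := by positivity
  have hB : 0 < Real.sqrt (1 + u ^ 2) := Real.sqrt_pos.mpr h
  have hB2 : Real.sqrt (1 + u ^ 2) ^ 2 = 1 + u ^ 2 := Real.sq_sqrt h.le
  have h1 : (0:ℝ) ≤ 1 / 2 - u * (1 + u ^ 2) ^ (-(1 : ℝ) / 2) / 2 := by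
    rw [auxRpow]; have := (auxMem u).2; linarith
  rw [← Real.sqrt_mul h1, auxRpow]
  have key : (1 / 2 - u * (Real.sqrt (1 + u ^ 2))⁻¹ / 2)
      * (1 / 2 + u * (Real.sqrt (1 + u ^ 2))⁻¹ / 2)
      = (2⁻¹ * (Real.sqrt (1 + u ^ 2))⁻¹) ^ 2 := by
    field_simp
    nlinarith [hB2]
  rw [key, Real.sqrt_sq (by positivity)]

theorem spectral_localiser_congruence {A : Type*} [CStarAlgebra A] [PartialOrder A]
    [StarOrderedRing A] (v : A) (hv : v ∈ unitary A) (D : A) (hD : IsSelfAdjoint D)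
    (t : ℝ) (ht : 0 < t) :
    let c : ℝ → ℝ := fun x => Real.sqrt (1 / 2 - x * (1 + x ^ 2) ^ (-(1 : ℝ) / 2) / 2)
    let s : ℝ → ℝ := fun x => Real.sqrt (1 / 2 + x * (1 + x ^ 2) ^ (-(1 : ℝ) / 2) / 2)
    let ct := cfc (fun x : ℝ => c (x / t)) D
    let st := cfc (fun x : ℝ => s (x / t)) D
    let g := cfc (fun x : ℝ => (1 + x ^ 2 / t ^ 2) ^ (-(1 : ℝ) / 4)) D
    let Dt := t⁻¹ • D
    ∀ rt : A, 0 ≤ rt → rt ^ 2 = ct * st →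
      (0 ≤ g ∧ IsUnit g) ∧
      2 * (!![st ^ 2, rt * v * rt; rt * star v * rt, ct ^ 2] : Matrix (Fin 2) (Fin 2) A) - 1 =
        !![g, 0; 0, g] * !![Dt, v; star v, -Dt] * !![g, 0; 0, g] := by
  intro c s ct st g Dt rt hrt0 hrt2
  have hpos : ∀ x : ℝ, (0:ℝ) < 1 + x ^ 2 / t ^ 2 := fun x => by positivity
  have hpos' : ∀ x : ℝ, (0:ℝ) < 1 + (x / t) ^ 2 := fun x => by positivity
  -- continuity facts
  have hcg : Continuous (fun x : ℝ => (1 + x ^ 2 / t ^ 2) ^ (-(1 : ℝ) / 4)) :=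
    Continuous.rpow_const (by fun_prop) (fun x => Or.inl (hpos x).ne')
  have hcg' : Continuous (fun x : ℝ => (1 + x ^ 2 / t ^ 2) ^ ((1 : ℝ) / 4)) :=
    Continuous.rpow_const (by fun_prop) (fun x => Or.inl (hpos x).ne')
  have hchalf : Continuous (fun x : ℝ => (1 + x ^ 2 / t ^ 2) ^ (-(1 : ℝ) / 2)) :=
    Continuous.rpow_const (by fun_prop) (fun x => Or.inl (hpos x).ne')
  have hcinner : Continuous (fun x : ℝ => (x / t) * (1 + (x / t) ^ 2) ^ (-(1 : ℝ) / 2)) := by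
    have h1 : Continuous (fun x : ℝ => (1 + (x / t) ^ 2) ^ (-(1 : ℝ) / 2)) :=
      Continuous.rpow_const (by fun_prop) (fun x => Or.inl (hpos' x).ne')
    exact (continuous_id.div_const t).mul h1
  have hcs : Continuous (fun x : ℝ => s (x / t)) :=
    Real.continuous_sqrt.comp (continuous_const.add (hcinner.div_const 2))
  have hcc : Continuous (fun x : ℝ => c (x / t)) :=
    Real.continuous_sqrt.comp (continuous_const.sub (hcinner.div_const 2))
  -- g is nonneg
  have hg0 : 0 ≤ g := cfc_nonneg (fun x _ => by positivity)
  -- g is a unit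
  set g' := cfc (fun x : ℝ => (1 + x ^ 2 / t ^ 2) ^ ((1 : ℝ) / 4)) D with hg'def
  have hmul1 : ∀ x : ℝ,
      (1 + x ^ 2 / t ^ 2) ^ (-(1 : ℝ) / 4) * (1 + x ^ 2 / t ^ 2) ^ ((1 : ℝ) / 4) = 1 := by
    intro x
    rw [← Real.rpow_add (hpos x)]
    norm_num
  have hgg' : g * g' = 1 := by
    rw [show g * g' = cfc (fun x : ℝ =>
        (1 + x ^ 2 / t ^ 2) ^ (-(1 : ℝ) / 4) * (1 + x ^ 2 / t ^ 2) ^ ((1 : ℝ) / 4)) D from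
      (cfc_mul _ _ D hcg.continuousOn hcg'.continuousOn).symm]
    calc cfc (fun x : ℝ =>
        (1 + x ^ 2 / t ^ 2) ^ (-(1 : ℝ) / 4) * (1 + x ^ 2 / t ^ 2) ^ ((1 : ℝ) / 4)) D
        = cfc (1 : ℝ → ℝ) D := cfc_congr (fun x _ => hmul1 x)
      _ = 1 := cfc_one ℝ D
  have hg'g : g' * g = 1 := by
    rw [show g' * g = cfc (fun x : ℝ =>
        (1 + x ^ 2 / t ^ 2) ^ ((1 : ℝ) / 4) * (1 + x ^ 2 / t ^ 2) ^ (-(1 : ℝ) / 4)) D from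
      (cfc_mul _ _ D hcg'.continuousOn hcg.continuousOn).symm]
    calc cfc (fun x : ℝ =>
        (1 + x ^ 2 / t ^ 2) ^ ((1 : ℝ) / 4) * (1 + x ^ 2 / t ^ 2) ^ (-(1 : ℝ) / 4)) D
        = cfc (1 : ℝ → ℝ) D := cfc_congr (fun x _ => by rw [mul_comm]; exact hmul1 x)
      _ = 1 := cfc_one ℝ D
  have hgunit : IsUnit g := ⟨⟨g, g', hgg', hg'g⟩, rfl⟩
  -- g * g
  have hgg : g * g = cfc (fun x : ℝ => (1 + x ^ 2 / t ^ 2) ^ (-(1 : ℝ) / 2)) D := by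
    rw [← cfc_mul _ _ D hcg.continuousOn hcg.continuousOn]
    exact cfc_congr fun x _ => by
      rw [← Real.rpow_add (hpos x)]; norm_num
  -- g * D * g
  have hgDg : g * D * g = cfc (fun x : ℝ => x * (1 + x ^ 2 / t ^ 2) ^ (-(1 : ℝ) / 2)) D := by
    conv_lhs => rw [← cfc_id ℝ D]
    rw [← cfc_mul _ _ D hcg.continuousOn (continuousOn_id (s := spectrum ℝ D)),
      ← cfc_mul (fun x : ℝ => (1 + x ^ 2 / t ^ 2) ^ (-(1 : ℝ) / 4) * id x) _ D
        (hcg.mul continuous_id).continuousOn hcg.continuousOn]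
    exact cfc_congr fun x _ => by
      show (1 + x ^ 2 / t ^ 2) ^ (-(1 : ℝ) / 4) * x * (1 + x ^ 2 / t ^ 2) ^ (-(1 : ℝ) / 4) = _
      rw [mul_comm ((1 + x ^ 2 / t ^ 2) ^ (-(1 : ℝ) / 4)) x, mul_assoc,
        ← Real.rpow_add (hpos x)]
      norm_num
  have hdiag : g * Dt * g = t⁻¹ • (g * D * g) := by
    show g * (t⁻¹ • D) * g = _
    rw [mul_smul_comm, smul_mul_assoc]
  -- scalar 2
  have h2smul : ∀ y : A, (2 : A) * y = (2 : ℝ) • y := fun y => by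
    rw [Algebra.smul_def, map_ofNat]
  -- diagonal entries
  have hst2 : st ^ 2
      = cfc (fun x : ℝ => 1 / 2 + (x / t) * (1 + (x / t) ^ 2) ^ (-(1 : ℝ) / 2) / 2) D := by
    show cfc (fun x : ℝ => s (x / t)) D ^ 2 = _
    rw [← cfc_pow _ 2 D hcs.continuousOn]
    exact cfc_congr fun x _ => sSq (x / t)
  have hct2 : ct ^ 2
      = cfc (fun x : ℝ => 1 / 2 - (x / t) * (1 + (x / t) ^ 2) ^ (-(1 : ℝ) / 2) / 2) D := by
    show cfc (fun x : ℝ => c (x / t)) D ^ 2 = _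
    rw [← cfc_pow _ 2 D hcc.continuousOn]
    exact cfc_congr fun x _ => cSq (x / t)
  have hcid : Continuous (fun x : ℝ => x * (1 + x ^ 2 / t ^ 2) ^ (-(1 : ℝ) / 2)) :=
    continuous_id.mul hchalf
  have hphis : Continuous (fun x : ℝ => 1 / 2 + (x / t) * (1 + (x / t) ^ 2) ^ (-(1 : ℝ) / 2) / 2) :=
    continuous_const.add (hcinner.div_const 2)
  have hphic : Continuous (fun x : ℝ => 1 / 2 - (x / t) * (1 + (x / t) ^ 2) ^ (-(1 : ℝ) / 2) / 2) :=
    continuous_const.sub (hcinner.div_const 2)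
  have hE1 : (2 : A) * st ^ 2 - 1 = g * Dt * g := by
    rw [hdiag, hgDg, ← cfc_smul t⁻¹ _ D hcid.continuousOn,
      hst2, h2smul, ← cfc_smul (2 : ℝ) _ D hphis.continuousOn,
      ← cfc_one (R := ℝ) (a := D),
      ← cfc_sub (fun x : ℝ => (2:ℝ) • (1 / 2 + (x / t) * (1 + (x / t) ^ 2) ^ (-(1 : ℝ) / 2) / 2)) _ D
        (hphis.const_smul (2:ℝ)).continuousOn continuous_one.continuousOn]
    refine cfc_congr fun x _ => ?_
    simp only [smul_eq_mul, Pi.one_apply]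
    rw [div_pow]
    ring
  have hE2 : (2 : A) * ct ^ 2 - 1 = g * (-Dt) * g := by
    rw [mul_neg, neg_mul, hdiag, hgDg, ← cfc_smul t⁻¹ _ D hcid.continuousOn, ← cfc_neg,
      hct2, h2smul, ← cfc_smul (2 : ℝ) _ D hphic.continuousOn,
      ← cfc_one (R := ℝ) (a := D),
      ← cfc_sub (fun x : ℝ => (2:ℝ) • (1 / 2 - (x / t) * (1 + (x / t) ^ 2) ^ (-(1 : ℝ) / 2) / 2)) _ D
        (hphic.const_smul (2:ℝ)).continuousOn continuous_one.continuousOn]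
    refine cfc_congr fun x _ => ?_
    simp only [smul_eq_mul, Pi.one_apply]
    rw [div_pow]
    ring
  -- rt = (√2)⁻¹ • g
  have hsqrt2 : (Real.sqrt 2)⁻¹ * (Real.sqrt 2)⁻¹ = (2 : ℝ)⁻¹ := by
    rw [← mul_inv, Real.mul_self_sqrt (by norm_num)]
  have hrg : rt = (Real.sqrt 2)⁻¹ • g := by
    have h2 : ((Real.sqrt 2)⁻¹ • g) * ((Real.sqrt 2)⁻¹ • g) = ct * st := by
      rw [smul_mul_smul_comm, hsqrt2, hgg,
        ← cfc_smul (2 : ℝ)⁻¹ _ D hchalf.continuousOn,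
        show ct * st = cfc (fun x : ℝ => c (x / t) * s (x / t)) D from
          (cfc_mul _ _ D hcc.continuousOn hcs.continuousOn).symm]
      symm
      exact cfc_congr fun x _ => by
        show c (x / t) * s (x / t) = (2:ℝ)⁻¹ • (1 + x ^ 2 / t ^ 2) ^ (-(1 : ℝ) / 2)
        rw [smul_eq_mul, show (1 + x ^ 2 / t ^ 2) = (1 + (x / t) ^ 2) by rw [div_pow]]
        exact csMul (x / t)
    have h0 : 0 ≤ (Real.sqrt 2)⁻¹ • g := smul_nonneg (by positivity) hg0
    have e1 : CFC.sqrt (ct * st) = rt := CFC.sqrt_unique (by rw [← sq]; exact hrt2) hrt0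
    have e2 : CFC.sqrt (ct * st) = (Real.sqrt 2)⁻¹ • g := CFC.sqrt_unique h2 h0
    rw [← e1, e2]
  have hsmul3 : ∀ (a : ℝ) (x y z : A), (a • x) * y * (a • z) = (a * a) • (x * y * z) :=
    fun a x y z => by
      rw [smul_mul_assoc, smul_mul_assoc, mul_smul_comm, smul_smul]
  have hE3 : ∀ w : A, (2 : A) * (rt * w * rt) = g * w * g := by
    intro w
    rw [hrg, h2smul, hsmul3, hsqrt2, smul_smul, show (2:ℝ) * 2⁻¹ = 1 by norm_num, one_smul]
  rw [two_mul] at hE1 hE2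
  have hE3' : ∀ w : A, rt * w * rt + rt * w * rt = g * w * g := fun w => by
    rw [← hE3 w, two_mul]
  refine ⟨⟨hg0, hgunit⟩, ?_⟩
  rw [two_mul]
  ext i j
  fin_cases i <;> fin_cases j <;>
    simp [Matrix.mul_apply, Fin.sum_univ_two]
  · exact hE1
  · exact hE3' v
  · exact hE3' (star v)
  · rw [hE2, mul_neg, neg_mul]
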